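/- Let ℓ be a power of 2 with ℓ ≥ 2, κ > 0, and suppose nonnegative reals x_0,…,x_{log₂ ℓ} satisfy Σ_{i=0}^{log₂ ℓ} (ℓ/2^i)·x_i ≤ ℓκ. Then there exists j, 0 ≤ j ≤ log₂ ℓ, such that (2^j·κ) / (Σ_{i=0}^{j} x_i) ≥ (log₂ ℓ)/2 (interpreting the ratio as +∞ if the denominator is 0). -/

import Mathlib

theorem stmt_9 (L : ℕ) (hL : 1 ≤ L) (κ : ℝ) (hκ : 0 < κ)
    (x : ℕ → ℝ) (hx : ∀ i, 0 ≤ x i)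
    (hcap : ∑ i ∈ Finset.range (L + 1), ((2 : ℝ) ^ L / 2 ^ i) * x i ≤ (2 : ℝ) ^ L * κ) :
    ∃ j ≤ L, (∑ i ∈ Finset.range (j + 1), x i = 0) ∨
      (L : ℝ) / 2 ≤ ((2 : ℝ) ^ j * κ) / ∑ i ∈ Finset.range (j + 1), x i := by
  by_contra hcon
  push_neg at hcon
  set S : ℕ → ℝ := fun j => ∑ i ∈ Finset.range (j + 1), x i with hSdef
  have hSnn : ∀ j, 0 ≤ S j := fun j => Finset.sum_nonneg fun i _ => hx i
  have hLpos : (0 : ℝ) < L := by exact_mod_cast hL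
  have hSpos : ∀ j ≤ L, 0 < S j := by
    intro j hj
    exact lt_of_le_of_ne (hSnn j) (Ne.symm (hcon j hj).1)
  have hSbig : ∀ j ≤ L, 2 ^ (j + 1) * κ / L < S j := by
    intro j hj
    have h2 := (hcon j hj).2
    rw [div_lt_div_iff₀ (hSpos j hj) two_pos] at h2
    rw [div_lt_iff₀ hLpos]
    rw [pow_succ]
    linarith
  have key : ∀ n, ∑ i ∈ Finset.range (n + 1), (1 / 2 : ℝ) ^ i * x i
      = (1 / 2) ^ n * S n + ∑ j ∈ Finset.range n, (1 / 2) ^ (j + 1) * S j := by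
    intro n
    induction n with
    | zero => simp [hSdef]
    | succ n ih =>
      rw [Finset.sum_range_succ, ih, Finset.sum_range_succ]
      have hstep : S (n + 1) = S n + x (n + 1) := by
        simp only [hSdef]
        rw [Finset.sum_range_succ]
      rw [hstep]; ring
  have hcap' : ∑ i ∈ Finset.range (L + 1), (1 / 2 : ℝ) ^ i * x i ≤ κ := by
    have h2L : (0 : ℝ) < 2 ^ L := by positivity
    calc ∑ i ∈ Finset.range (L + 1), (1 / 2 : ℝ) ^ i * x i
        = (∑ i ∈ Finset.range (L + 1), ((2 : ℝ) ^ L / 2 ^ i) * x i) / 2 ^ L := by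
          rw [Finset.sum_div]
          refine Finset.sum_congr rfl fun i _ => ?_
          field_simp
          rw [mul_right_comm, ← mul_pow]; norm_num
      _ ≤ ((2 : ℝ) ^ L * κ) / 2 ^ L := by
          exact div_le_div_of_nonneg_right hcap h2L.le |>.trans_eq rfl
      _ = κ := by field_simp
  have hsum : κ < ∑ j ∈ Finset.range L, (1 / 2 : ℝ) ^ (j + 1) * S j := by
    have h1 : ∀ j ∈ Finset.range L, κ / L < (1 / 2 : ℝ) ^ (j + 1) * S j := by
      intro j hj
      have hjL : j ≤ L := le_of_lt (Finset.mem_range.mp hj)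
      have := hSbig j hjL
      have hpow : ((1 / 2 : ℝ) ^ (j + 1)) * (2 ^ (j + 1)) = 1 := by
        rw [← mul_pow]; norm_num
      calc κ / L = (1 / 2 : ℝ) ^ (j + 1) * (2 ^ (j + 1) * κ / L) := by
            rw [mul_div_assoc, ← mul_assoc, hpow, one_mul]
        _ < (1 / 2 : ℝ) ^ (j + 1) * S j := by
            have hpos : (0:ℝ) < (1/2:ℝ) ^ (j+1) := by positivity
            exact mul_lt_mul_of_pos_left this hpos
    have h2 : ∑ j ∈ Finset.range L, κ / L < ∑ j ∈ Finset.range L, (1 / 2 : ℝ) ^ (j + 1) * S j :=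
      Finset.sum_lt_sum_of_nonempty (Finset.nonempty_range_iff.mpr (by omega)) h1
    have h3 : ∑ j ∈ Finset.range L, κ / L = κ := by
      rw [Finset.sum_const, Finset.card_range, nsmul_eq_mul]
      field_simp
    linarith
  have hfirst : (0 : ℝ) ≤ (1 / 2) ^ L * S L := mul_nonneg (by positivity) (hSnn L)
  rw [key L] at hcap'
  linarith
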